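/- arXiv:2412.04763 — 4 statements merged into one kernel-verified Lean document; each statement's English description precedes it below -/
import Mathlib

section
/- Let I ⊆ ℝ be an open interval, t₀ ∈ I, and let p, q, g : I → ℝ be continuous functions. Then there exists exactly one twice differentiable function y : I → ℝ satisfying y''(t) + p(t)·y'(t) + q(t)·y(t) = g(t) for all t ∈ I together with the initial conditions y(t₀) = 0 and y'(t₀) = 0. -/
open Set Filter Topology

noncomputable def clampR (R s : ℝ) : ℝ := max (-R) (min R s)

lemma clampR_lip (R a b : ℝ) : |clampR R a - clampR R b| ≤ |a - b| := by
  unfold clampR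
  calc |max (-R) (min R a) - max (-R) (min R b)|
      = |max (min R a) (-R) - max (min R b) (-R)| := by rw [max_comm (-R), max_comm (-R)]
    _ ≤ |min R a - min R b| := abs_max_sub_max_le_abs _ _ _
    _ ≤ max |R - R| |a - b| := abs_min_sub_min_le_max _ _ _ _
    _ = |a - b| := by simp

lemma clampR_abs_le (R s : ℝ) (hR : 0 ≤ R) : |clampR R s| ≤ R := by
  unfold clampR
  rw [abs_le]
  constructor
  · exact neg_le_neg_iff.mpr le_rfl |>.trans_eq rfl |>.trans (le_max_left _ _)
  · exact max_le (by linarith) ((min_le_left _ _))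

lemma clampR_abs_le_abs (R s : ℝ) (hR : 0 ≤ R) : |clampR R s| ≤ |s| := by
  unfold clampR
  rw [abs_le]
  rcases le_total s 0 with h | h
  · rw [min_eq_right (h.trans hR)]
    constructor
    · simp [abs_of_nonpos h]
    · exact max_le (by simp [abs_of_nonpos h]; linarith) (by simp [abs_of_nonpos h]; exact h)
  · rw [max_eq_right (le_trans (by linarith) (le_min hR h))]
    constructor
    · exact le_trans (by rw [abs_of_nonneg h]; linarith) (le_min hR h)
    · rw [abs_of_nonneg h]; exact min_le_right _ _
  
lemma clampR_eq (R s : ℝ) (h : |s| ≤ R) : clampR R s = s := by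
  unfold clampR
  rw [abs_le] at h
  rw [min_eq_right h.2, max_eq_right h.1]

noncomputable def ivpF (p q g : ℝ → ℝ) (t : ℝ) (x : ℝ × ℝ) : ℝ × ℝ :=
  (x.2, g t - p t * x.2 - q t * x.1)

lemma lip_affine {P Q G M : ℝ} (hP : |P| ≤ M) (hQ : |Q| ≤ M) :
    LipschitzWith (Real.toNNReal (1 + 2 * M)) (fun x : ℝ × ℝ => ((x.2, G - P * x.2 - Q * x.1) : ℝ × ℝ)) := by
  have hM : 0 ≤ M := (abs_nonneg P).trans hP
  apply LipschitzWith.of_dist_le_mul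
  intro x y
  rw [Prod.dist_eq, Prod.dist_eq]
  rw [Real.coe_toNNReal _ (by linarith)]
  simp only [Real.dist_eq]
  set D := max |x.1 - y.1| |x.2 - y.2| with hD
  have h1 : |x.1 - y.1| ≤ D := le_max_left _ _
  have h2 : |x.2 - y.2| ≤ D := le_max_right _ _
  have hD0 : 0 ≤ D := le_trans (abs_nonneg _) h1
  apply max_le
  · nlinarith
  · have : (G - P * x.2 - Q * x.1) - (G - P * y.2 - Q * y.1) = P * (y.2 - x.2) + Q * (y.1 - x.1) := by ring
    rw [this]
    calc |P * (y.2 - x.2) + Q * (y.1 - x.1)| ≤ |P * (y.2 - x.2)| + |Q * (y.1 - x.1)| := abs_add_le _ _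
      _ = |P| * |y.2 - x.2| + |Q| * |y.1 - x.1| := by rw [abs_mul, abs_mul]
      _ ≤ M * D + M * D := by
          rw [abs_sub_comm y.2, abs_sub_comm y.1]
          have a2 := abs_nonneg (x.2 - y.2); have a1 := abs_nonneg (x.1 - y.1)
          nlinarith
      _ ≤ (1 + 2 * M) * D := by nlinarith

lemma clampPair_lip (R : ℝ) : LipschitzWith 1 (fun x : ℝ × ℝ => ((clampR R x.1, clampR R x.2) : ℝ × ℝ)) := by
  apply LipschitzWith.of_dist_le_mul
  intro x y
  rw [Prod.dist_eq, Prod.dist_eq, NNReal.coe_one, one_mul]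
  simp only [Real.dist_eq]
  exact max_le_max (clampR_lip _ _ _) (clampR_lip _ _ _)

set_option maxHeartbeats 1000000 in
lemma ivp_exists_sol (I : Set ℝ) (p q g : ℝ → ℝ)
    (hp : ContinuousOn p I) (hq : ContinuousOn q I) (hg : ContinuousOn g I)
    (a b t₀ : ℝ) (hab : Icc a b ⊆ I) (ht₀ : t₀ ∈ Icc a b) :
    ∃ u : ℝ → ℝ × ℝ, u t₀ = 0 ∧
      ∀ t ∈ Icc a b, HasDerivWithinAt u (ivpF p q g t (u t)) (Icc a b) t := by
  -- bound the coefficients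
  obtain ⟨Cp, hCp⟩ := isCompact_Icc.exists_bound_of_continuousOn (hp.mono hab)
  obtain ⟨Cq, hCq⟩ := isCompact_Icc.exists_bound_of_continuousOn (hq.mono hab)
  obtain ⟨Cg, hCg⟩ := isCompact_Icc.exists_bound_of_continuousOn (hg.mono hab)
  set M : ℝ := max 1 (max Cp (max Cq Cg)) with hM
  have hM1 : (1 : ℝ) ≤ M := le_max_left _ _
  have hM0 : (0 : ℝ) ≤ M := by linarith
  have hpM : ∀ t ∈ Icc a b, |p t| ≤ M := fun t ht =>
    (Real.norm_eq_abs _ ▸ hCp t ht).trans (le_max_of_le_right (le_max_left _ _))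
  have hqM : ∀ t ∈ Icc a b, |q t| ≤ M := fun t ht =>
    (Real.norm_eq_abs _ ▸ hCq t ht).trans
      (le_max_of_le_right (le_max_of_le_right (le_max_left _ _)))
  have hgM : ∀ t ∈ Icc a b, |g t| ≤ M := fun t ht =>
    (Real.norm_eq_abs _ ▸ hCg t ht).trans
      (le_max_of_le_right (le_max_of_le_right (le_max_right _ _)))
  have hatb : a ≤ b := ht₀.1.trans ht₀.2
  -- a priori bound and cutoff radius
  set B : ℝ := M * Real.exp (2 * M * (b - a)) with hB
  have hexp : (0:ℝ) < Real.exp (2 * M * (b - a)) := Real.exp_pos _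
  have hB0 : 0 ≤ B := by positivity
  set R : ℝ := B + 1 with hR
  have hR0 : (0:ℝ) ≤ R := by linarith
  -- cutoff vector field
  set FR : ℝ → ℝ × ℝ → ℝ × ℝ := fun t x =>
    (clampR R x.2, g t - p t * clampR R x.2 - q t * clampR R x.1) with hFR
  set L : NNReal := Real.toNNReal (1 + 2 * M) with hL
  set C : ℝ := M * (1 + 2 * R) with hC
  have hC0 : 0 ≤ C := by positivity
  set R' : ℝ := C * (max (b - t₀) (t₀ - a) + 1) with hR'
  have hmax0 : 0 ≤ max (b - t₀) (t₀ - a) := le_max_of_le_left (by linarith [ht₀.2])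
  have hFRlip : ∀ t ∈ Icc a b, LipschitzWith L (FR t) := by
    intro t ht
    have := (lip_affine (G := g t) (hpM t ht) (hqM t ht)).comp (clampPair_lip R)
    rw [mul_one] at this; exact this
  have hFRnorm : ∀ t ∈ Icc a b, ∀ x : ℝ × ℝ, ‖FR t x‖ ≤ 2 * M * ‖x‖ + M := by
    intro t ht x
    have hx0 : 0 ≤ ‖x‖ := norm_nonneg x
    have h1 : |x.1| ≤ ‖x‖ := by simpa [Real.norm_eq_abs] using norm_fst_le x
    have h2 : |x.2| ≤ ‖x‖ := by simpa [Real.norm_eq_abs] using norm_snd_le x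
    have c1 : |clampR R x.1| ≤ ‖x‖ := (clampR_abs_le_abs R x.1 hR0).trans h1
    have c2 : |clampR R x.2| ≤ ‖x‖ := (clampR_abs_le_abs R x.2 hR0).trans h2
    rw [Prod.norm_def]
    apply max_le
    · rw [Real.norm_eq_abs]; nlinarith
    · rw [Real.norm_eq_abs]
      have : |g t - p t * clampR R x.2 - q t * clampR R x.1| ≤
          |g t| + |p t| * |clampR R x.2| + |q t| * |clampR R x.1| := by
        calc |g t - p t * clampR R x.2 - q t * clampR R x.1|
            ≤ |g t - p t * clampR R x.2| + |q t * clampR R x.1| := abs_sub _ _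
          _ ≤ |g t| + |p t * clampR R x.2| + |q t * clampR R x.1| := by
              have := abs_sub (g t) (p t * clampR R x.2); linarith
          _ = |g t| + |p t| * |clampR R x.2| + |q t| * |clampR R x.1| := by
              rw [abs_mul, abs_mul]
      have hg' := hgM t ht; have hp' := hpM t ht; have hq' := hqM t ht
      have ap := abs_nonneg (p t); have aq := abs_nonneg (q t)
      nlinarith
  -- Picard-Lindelöf on the cutoff field
  have hR'0 : 0 ≤ R' := mul_nonneg hC0 (by linarith)
  have hpl : IsPicardLindelof FR (tmin := a) (tmax := b) ⟨t₀, ht₀⟩ (0 : ℝ × ℝ)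
      (a := R'.toNNReal) (r := 0) (L := C.toNNReal) (K := L) := by
    constructor
    · exact fun t ht => (hFRlip t ht).lipschitzOnWith
    · intro x _
      apply ContinuousOn.prodMk continuousOn_const
      exact ((hg.mono hab).sub ((hp.mono hab).mul continuousOn_const)).sub
        ((hq.mono hab).mul continuousOn_const)
    · intro t ht x _
      rw [Real.coe_toNNReal _ hC0]
      rw [Prod.norm_def]
      apply max_le
      · rw [Real.norm_eq_abs]
        have := clampR_abs_le R x.2 hR0
        nlinarith
      · rw [Real.norm_eq_abs]
        have c1 := clampR_abs_le R x.1 hR0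
        have c2 := clampR_abs_le R x.2 hR0
        have : |g t - p t * clampR R x.2 - q t * clampR R x.1| ≤
            |g t| + |p t| * |clampR R x.2| + |q t| * |clampR R x.1| := by
          calc |g t - p t * clampR R x.2 - q t * clampR R x.1|
              ≤ |g t - p t * clampR R x.2| + |q t * clampR R x.1| := abs_sub _ _
            _ ≤ |g t| + |p t * clampR R x.2| + |q t * clampR R x.1| := by
                have := abs_sub (g t) (p t * clampR R x.2); linarith
            _ = |g t| + |p t| * |clampR R x.2| + |q t| * |clampR R x.1| := by
                rw [abs_mul, abs_mul]
        have hg' := hgM t ht; have hp' := hpM t ht; have hq' := hqM t ht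
        have ap := abs_nonneg (p t); have aq := abs_nonneg (q t)
        have acl1 := abs_nonneg (clampR R x.1)
        have acl2 := abs_nonneg (clampR R x.2)
        nlinarith
    · simp only [Real.coe_toNNReal _ hC0, Real.coe_toNNReal _ hR'0, NNReal.coe_zero, sub_zero]
      rw [hR']; nlinarith
  obtain ⟨f, hf0, hfd⟩ := hpl.exists_eq_forall_mem_Icc_hasDerivWithinAt₀
  replace hf0 : f t₀ = 0 := hf0
  have hfc : ContinuousOn f (Icc a b) := fun t ht => (hfd t ht).continuousWithinAt
  -- Gronwall bound helper
  have gb_le : ∀ x : ℝ, 0 ≤ x → x ≤ b - a → gronwallBound 0 (2 * M) M x ≤ B := by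
    intro x hx0 hxba
    rw [gronwallBound_of_K_ne_0 (by positivity)]
    have h1 : Real.exp (2 * M * x) ≤ Real.exp (2 * M * (b - a)) :=
      Real.exp_le_exp.2 (by nlinarith)
    have h2 : (0:ℝ) < Real.exp (2 * M * x) := Real.exp_pos _
    rw [hB]
    have hMne : M ≠ 0 := by linarith
    field_simp
    have h3 := mul_nonneg (by linarith : (0:ℝ) ≤ 2 * M - 1) hexp.le
    nlinarith
  -- forward a priori bound
  have hfwd : ∀ t ∈ Icc t₀ b, ‖f t‖ ≤ B := by
    intro t ht
    have key := norm_le_gronwallBound_of_norm_deriv_right_le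
      (f := f) (f' := fun t => FR t (f t)) (δ := 0) (K := 2 * M) (ε := M)
      (a := t₀) (b := b)
      (hfc.mono (Icc_subset_Icc_left ht₀.1))
      (fun s hs => by
        have hsab : s ∈ Icc a b := ⟨ht₀.1.trans hs.1, hs.2.le⟩
        refine (hfd s hsab).mono_of_mem_nhdsWithin ?_
        have h1 : Iio b ∈ 𝓝[Ici s] s := mem_nhdsWithin_of_mem_nhds (Iio_mem_nhds hs.2)
        refine Filter.mem_of_superset (Filter.inter_mem h1 self_mem_nhdsWithin) ?_
        rintro x ⟨hx1, hx2⟩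
        exact ⟨hsab.1.trans hx2, hx1.le⟩)
      (by simp [hf0])
      (fun s hs => hFRnorm s ⟨ht₀.1.trans hs.1, hs.2.le⟩ (f s))
    exact (key t ht).trans (gb_le _ (by linarith [ht.1]) (by linarith [ht.2, ht₀.1]))
  -- backward a priori bound via time reversal
  have hbwd : ∀ t ∈ Icc a t₀, ‖f t‖ ≤ B := by
    intro t ht
    set σ : ℝ → ℝ := fun s => 2 * t₀ - s with hσ
    have hσcont : Continuous σ := continuous_const.sub continuous_id
    have hmt : MapsTo σ (Icc t₀ (2 * t₀ - a)) (Icc a b) := by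
      rintro x ⟨hx1, hx2⟩
      constructor
      · simp only [hσ]; linarith
      · simp only [hσ]; linarith [ht₀.2]
    have key := norm_le_gronwallBound_of_norm_deriv_right_le
      (f := f ∘ σ) (f' := fun s => -(FR (σ s) (f (σ s)))) (δ := 0) (K := 2 * M) (ε := M)
      (a := t₀) (b := 2 * t₀ - a)
      ((hfc.mono (fun x hx => hx)).comp hσcont.continuousOn hmt)
      (fun s hs => by
        have hu : σ s ∈ Icc a b := hmt ⟨hs.1, hs.2.le⟩
        have h1 : HasDerivWithinAt f (FR (σ s) (f (σ s))) (Icc a b) (σ s) := hfd _ hu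
        have hσ' : HasDerivWithinAt σ (-1) (Icc s (2 * t₀ - a)) s :=
          ((hasDerivAt_id s).const_sub (2 * t₀)).hasDerivWithinAt
        have hmt2 : MapsTo σ (Icc s (2 * t₀ - a)) (Icc a b) := by
          rintro x ⟨hx1, hx2⟩
          constructor
          · simp only [hσ]; linarith
          · simp only [hσ]; linarith [ht₀.2, hs.1]
        have hcomp := HasDerivWithinAt.scomp (x := s) h1 hσ' hmt2
        have hcomp' : HasDerivWithinAt (f ∘ σ) (-(FR (σ s) (f (σ s))))
            (Icc s (2 * t₀ - a)) s := by
          rw [neg_one_smul] at hcomp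
          exact hcomp
        refine hcomp'.mono_of_mem_nhdsWithin ?_
        have h2 : Iio (2 * t₀ - a) ∈ 𝓝[Ici s] s := mem_nhdsWithin_of_mem_nhds (Iio_mem_nhds hs.2)
        refine Filter.mem_of_superset (Filter.inter_mem h2 self_mem_nhdsWithin) ?_
        rintro x ⟨hx1, hx2⟩
        exact ⟨hx2, hx1.le⟩)
      (by simp [hσ, Function.comp, show 2*t₀ - t₀ = t₀ by ring, hf0])
      (fun s hs => by
        rw [norm_neg]
        exact hFRnorm _ (hmt ⟨hs.1, hs.2.le⟩) _)
    have hs : 2 * t₀ - t ∈ Icc t₀ (2 * t₀ - a) := ⟨by linarith [ht.2], by linarith [ht.1]⟩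
    have := key _ hs
    simp only [Function.comp, hσ] at this
    have heq : 2 * t₀ - (2 * t₀ - t) = t := by ring
    rw [heq] at this
    exact this.trans (gb_le _ (by linarith [ht.2]) (by linarith [ht.1, ht₀.2]))
  have hbound : ∀ t ∈ Icc a b, ‖f t‖ ≤ B := by
    intro t ht
    rcases le_total t t₀ with h | h
    · exact hbwd t ⟨ht.1, h⟩
    · exact hfwd t ⟨h, ht.2⟩
  -- on the bounded region, FR agrees with ivpF
  refine ⟨f, hf0, fun t ht => ?_⟩
  have hb1 : |(f t).1| ≤ R := by
    have := (Real.norm_eq_abs _ ▸ norm_fst_le (f t)).trans (hbound t ht)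
    linarith
  have hb2 : |(f t).2| ≤ R := by
    have := (Real.norm_eq_abs _ ▸ norm_snd_le (f t)).trans (hbound t ht)
    linarith
  have : FR t (f t) = ivpF p q g t (f t) := by
    simp only [hFR, ivpF, clampR_eq R _ hb1, clampR_eq R _ hb2]
  exact this ▸ hfd t ht

lemma ivp_uniq (I : Set ℝ) (p q g : ℝ → ℝ)
    (hp : ContinuousOn p I) (hq : ContinuousOn q I)
    (a b t₀ : ℝ) (hab : Icc a b ⊆ I) (ht₀ : t₀ ∈ Ioo a b)
    (u v : ℝ → ℝ × ℝ)
    (hu : ∀ t ∈ Ioo a b, HasDerivAt u (ivpF p q g t (u t)) t)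
    (hv : ∀ t ∈ Ioo a b, HasDerivAt v (ivpF p q g t (v t)) t)
    (h0 : u t₀ = v t₀) : EqOn u v (Ioo a b) := by
  have hle : a ≤ b := (ht₀.1.trans ht₀.2).le
  obtain ⟨Cp, hCp⟩ := isCompact_Icc.exists_bound_of_continuousOn (hp.mono hab)
  obtain ⟨Cq, hCq⟩ := isCompact_Icc.exists_bound_of_continuousOn (hq.mono hab)
  set M : ℝ := max 0 (max Cp Cq) with hM
  have hpM : ∀ t ∈ Icc a b, |p t| ≤ M := fun t ht =>
    (Real.norm_eq_abs _ ▸ hCp t ht).trans (le_max_of_le_right (le_max_left _ _))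
  have hqM : ∀ t ∈ Icc a b, |q t| ≤ M := fun t ht =>
    (Real.norm_eq_abs _ ▸ hCq t ht).trans (le_max_of_le_right (le_max_right _ _))
  set vf : ℝ → ℝ × ℝ → ℝ × ℝ := fun t x => ivpF p q g (projIcc a b hle t) x with hvf
  have hlip : ∀ t : ℝ, LipschitzOnWith (Real.toNNReal (1 + 2 * M)) (vf t) univ := by
    intro t
    have h1 := (projIcc a b hle t).2
    exact (lip_affine (G := g (projIcc a b hle t)) (hpM _ h1) (hqM _ h1)).lipschitzOnWith
  have hproj : ∀ t ∈ Ioo a b, ∀ x, vf t x = ivpF p q g t x := by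
    intro t ht x
    simp only [hvf]
    rw [projIcc_of_mem hle (Ioo_subset_Icc_self ht)]
  exact ODE_solution_unique_of_mem_Ioo (fun t _ => hlip t) ht₀
    (fun t ht => ⟨by rw [hproj t ht]; exact hu t ht, mem_univ _⟩)
    (fun t ht => ⟨by rw [hproj t ht]; exact hv t ht, mem_univ _⟩) h0

lemma ivp_bracket (I : Set ℝ) (hIopen : IsOpen I) (hIconv : Convex ℝ I)
    {t t₀ : ℝ} (ht : t ∈ I) (ht₀ : t₀ ∈ I) :
    ∃ a b, Icc a b ⊆ I ∧ t ∈ Ioo a b ∧ t₀ ∈ Ioo a b := by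
  obtain ⟨ε1, hε1, hb1⟩ := Metric.isOpen_iff.1 hIopen t ht
  obtain ⟨ε2, hε2, hb2⟩ := Metric.isOpen_iff.1 hIopen t₀ ht₀
  refine ⟨min (t - ε1 / 2) (t₀ - ε2 / 2), max (t + ε1 / 2) (t₀ + ε2 / 2), ?_, ?_, ?_⟩
  · have ha : min (t - ε1 / 2) (t₀ - ε2 / 2) ∈ I := by
      rcases min_cases (t - ε1 / 2) (t₀ - ε2 / 2) with ⟨h, _⟩ | ⟨h, _⟩ <;> rw [h]
      · exact hb1 (by rw [Real.ball_eq_Ioo]; constructor <;> [linarith; linarith])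
      · exact hb2 (by rw [Real.ball_eq_Ioo]; constructor <;> [linarith; linarith])
    have hb : max (t + ε1 / 2) (t₀ + ε2 / 2) ∈ I := by
      rcases max_cases (t + ε1 / 2) (t₀ + ε2 / 2) with ⟨h, _⟩ | ⟨h, _⟩ <;> rw [h]
      · exact hb1 (by rw [Real.ball_eq_Ioo]; constructor <;> [linarith; linarith])
      · exact hb2 (by rw [Real.ball_eq_Ioo]; constructor <;> [linarith; linarith])
    exact hIconv.ordConnected.out ha hb
  · constructor
    · exact lt_of_le_of_lt (min_le_left _ _) (by linarith)
    · exact lt_of_lt_of_le (by linarith) (le_max_left _ _)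
  · constructor
    · exact lt_of_le_of_lt (min_le_right _ _) (by linarith)
    · exact lt_of_lt_of_le (by linarith) (le_max_right _ _)

/-- Existence and uniqueness for the initial value problem
`y'' + p t * y' + q t * y = g t`, `y t₀ = 0`, `y' t₀ = 0`,
for continuous coefficients `p, q, g` on an open interval `I` containing `t₀`.
Uniqueness is expressed as equality on `I` of any two solutions. -/
theorem second_order_ivp_existence_uniqueness
    (I : Set ℝ) (hIopen : IsOpen I) (hIconv : Convex ℝ I)
    (t₀ : ℝ) (ht₀ : t₀ ∈ I) (p q g : ℝ → ℝ)
    (hp : ContinuousOn p I) (hq : ContinuousOn q I) (hg : ContinuousOn g I) :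
    (∃ y : ℝ → ℝ,
      (∀ t ∈ I, DifferentiableAt ℝ y t) ∧
      (∀ t ∈ I, DifferentiableAt ℝ (deriv y) t) ∧
      (∀ t ∈ I, deriv (deriv y) t + p t * deriv y t + q t * y t = g t) ∧
      y t₀ = 0 ∧ deriv y t₀ = 0) ∧
    (∀ y₁ y₂ : ℝ → ℝ,
      ((∀ t ∈ I, DifferentiableAt ℝ y₁ t) ∧
       (∀ t ∈ I, DifferentiableAt ℝ (deriv y₁) t) ∧
       (∀ t ∈ I, deriv (deriv y₁) t + p t * deriv y₁ t + q t * y₁ t = g t) ∧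
       y₁ t₀ = 0 ∧ deriv y₁ t₀ = 0) →
      ((∀ t ∈ I, DifferentiableAt ℝ y₂ t) ∧
       (∀ t ∈ I, DifferentiableAt ℝ (deriv y₂) t) ∧
       (∀ t ∈ I, deriv (deriv y₂) t + p t * deriv y₂ t + q t * y₂ t = g t) ∧
       y₂ t₀ = 0 ∧ deriv y₂ t₀ = 0) →
      Set.EqOn y₁ y₂ I) := by
  classical
  -- solutions of the first-order system on compact subintervals
  let sol : ℝ → ℝ → (ℝ → ℝ × ℝ) := fun a b =>
    if h : Icc a b ⊆ I ∧ t₀ ∈ Icc a b then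
      Classical.choose (ivp_exists_sol I p q g hp hq hg a b t₀ h.1 h.2)
    else 0
  have sol_spec : ∀ a b, ∀ h1 : Icc a b ⊆ I, ∀ h2 : t₀ ∈ Icc a b,
      sol a b t₀ = 0 ∧
      ∀ t ∈ Icc a b, HasDerivWithinAt (sol a b) (ivpF p q g t (sol a b t)) (Icc a b) t := by
    intro a b h1 h2
    simp only [sol, dif_pos (And.intro h1 h2)]
    exact Classical.choose_spec (ivp_exists_sol I p q g hp hq hg a b t₀ h1 h2)
  -- any two local solutions agree where both are defined
  have step : ∀ a b, Icc a b ⊆ I → t₀ ∈ Ioo a b → ∀ c d, Icc c d ⊆ I →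
      Icc a b ⊆ Icc c d → EqOn (sol a b) (sol c d) (Ioo a b) := by
    intro a b h1 ht0 c d h2 hsub
    have hab : a ≤ b := (ht0.1.trans ht0.2).le
    have hca : c ≤ a := (hsub (left_mem_Icc.2 hab)).1
    have hbd : b ≤ d := (hsub (right_mem_Icc.2 hab)).2
    have hs1 := sol_spec a b h1 (Ioo_subset_Icc_self ht0)
    have hs2 := sol_spec c d h2 (hsub (Ioo_subset_Icc_self ht0))
    apply ivp_uniq I p q g hp hq a b t₀ h1 ht0
    · intro t ht
      exact (hs1.2 t (Ioo_subset_Icc_self ht)).hasDerivAt (Icc_mem_nhds ht.1 ht.2)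
    · intro t ht
      exact (hs2.2 t (hsub (Ioo_subset_Icc_self ht))).hasDerivAt
        (Icc_mem_nhds (lt_of_le_of_lt hca ht.1) (lt_of_lt_of_le ht.2 hbd))
    · rw [hs1.1, hs2.1]
  have key : ∀ a b, Icc a b ⊆ I → t₀ ∈ Ioo a b → ∀ c d, Icc c d ⊆ I → t₀ ∈ Ioo c d →
      ∀ t, t ∈ Ioo a b → t ∈ Ioo c d → sol a b t = sol c d t := by
    intro a b h1 ht1 c d h2 ht2 t hta htc
    set m := min a c with hm
    set n := max b d with hn
    have hmn : Icc m n ⊆ I := by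
      have hma : m ∈ I := by
        rcases min_cases a c with ⟨h, _⟩ | ⟨h, _⟩ <;> rw [hm, h]
        · exact h1 (left_mem_Icc.2 (ht1.1.trans ht1.2).le)
        · exact h2 (left_mem_Icc.2 (ht2.1.trans ht2.2).le)
      have hnb : n ∈ I := by
        rcases max_cases b d with ⟨h, _⟩ | ⟨h, _⟩ <;> rw [hn, h]
        · exact h1 (right_mem_Icc.2 (ht1.1.trans ht1.2).le)
        · exact h2 (right_mem_Icc.2 (ht2.1.trans ht2.2).le)
      exact hIconv.ordConnected.out hma hnb
    have e1 := step a b h1 ht1 m n hmn (Icc_subset_Icc (min_le_left _ _) (le_max_left _ _)) hta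
    have e2 := step c d h2 ht2 m n hmn (Icc_subset_Icc (min_le_right _ _) (le_max_right _ _)) htc
    rw [e1, e2]
  -- the global solution of the system
  have hbr : ∀ t, t ∈ I → ∃ a, ∃ b, Icc a b ⊆ I ∧ t ∈ Ioo a b ∧ t₀ ∈ Ioo a b :=
    fun t ht => ivp_bracket I hIopen hIconv ht ht₀
  choose! A B hAB hT hT0 using hbr
  set Y : ℝ → ℝ × ℝ := fun t => sol (A t) (B t) t with hYdef
  have hYagree : ∀ a b, Icc a b ⊆ I → t₀ ∈ Ioo a b → ∀ t ∈ Ioo a b, Y t = sol a b t := by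
    intro a b h1 ht1 t ht
    have htI : t ∈ I := h1 (Ioo_subset_Icc_self ht)
    exact key (A t) (B t) (hAB t htI) (hT0 t htI) a b h1 ht1 t (hT t htI) ht
  have hY0 : Y t₀ = 0 := by
    have h1 := hAB t₀ ht₀
    have := (sol_spec (A t₀) (B t₀) h1 (Ioo_subset_Icc_self (hT0 t₀ ht₀))).1
    simpa [hYdef] using this
  have hYd : ∀ t ∈ I, HasDerivAt Y (ivpF p q g t (Y t)) t := by
    intro t ht
    have h1 := hAB t ht
    have ht1 := hT t ht
    have ht0' := hT0 t ht
    have hs := sol_spec (A t) (B t) h1 (Ioo_subset_Icc_self ht0')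
    have hder : HasDerivAt (sol (A t) (B t)) (ivpF p q g t (sol (A t) (B t) t)) t :=
      (hs.2 t (Ioo_subset_Icc_self ht1)).hasDerivAt (Icc_mem_nhds ht1.1 ht1.2)
    have hev : Y =ᶠ[nhds t] sol (A t) (B t) :=
      Filter.eventuallyEq_of_mem (Ioo_mem_nhds ht1.1 ht1.2)
        (fun s hs' => hYagree (A t) (B t) h1 ht0' s hs')
    have := hder.congr_of_eventuallyEq hev
    rwa [show sol (A t) (B t) t = Y t from rfl] at this
  -- extract the scalar solution
  set y : ℝ → ℝ := fun t => (Y t).1 with hydef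
  have h1 : ∀ t ∈ I, HasDerivAt y ((Y t).2) t := by
    intro t ht
    have := (ContinuousLinearMap.fst ℝ ℝ ℝ).hasFDerivAt.comp_hasDerivAt t (hYd t ht)
    simpa [ivpF, Function.comp_def] using this
  have hdy : ∀ t ∈ I, deriv y t = (Y t).2 := fun t ht => (h1 t ht).deriv
  have h2 : ∀ t ∈ I, HasDerivAt (fun s => (Y s).2)
      (g t - p t * (Y t).2 - q t * (Y t).1) t := by
    intro t ht
    have := (ContinuousLinearMap.snd ℝ ℝ ℝ).hasFDerivAt.comp_hasDerivAt t (hYd t ht)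
    simpa [ivpF, Function.comp_def] using this
  have hd2 : ∀ t ∈ I, HasDerivAt (deriv y) (g t - p t * (Y t).2 - q t * (Y t).1) t := by
    intro t ht
    refine (h2 t ht).congr_of_eventuallyEq ?_
    exact Filter.eventuallyEq_of_mem (hIopen.mem_nhds ht) (fun s hs => hdy s hs)
  constructor
  · refine ⟨y, fun t ht => (h1 t ht).differentiableAt,
      fun t ht => (hd2 t ht).differentiableAt, ?_, ?_, ?_⟩
    · intro t ht
      have e1 := (hd2 t ht).deriv
      have e2 := hdy t ht
      rw [e1, e2]
      show g t - p t * (Y t).2 - q t * (Y t).1 + p t * (Y t).2 + q t * (Y t).1 = g t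
      ring
    · show (Y t₀).1 = 0
      rw [hY0]; rfl
    · rw [hdy t₀ ht₀, hY0]; rfl
  · rintro y₁ y₂ ⟨ha1, ha2, ha3, ha4, ha5⟩ ⟨hb1, hb2, hb3, hb4, hb5⟩ t ht
    set u₁ : ℝ → ℝ × ℝ := fun s => (y₁ s, deriv y₁ s) with hu₁
    set u₂ : ℝ → ℝ × ℝ := fun s => (y₂ s, deriv y₂ s) with hu₂
    have hu : ∀ s ∈ I, HasDerivAt u₁ (ivpF p q g s (u₁ s)) s := by
      intro s hs
      have a1 : HasDerivAt y₁ (deriv y₁ s) s := (ha1 s hs).hasDerivAt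
      have a2 : HasDerivAt (deriv y₁) (deriv (deriv y₁) s) s := (ha2 s hs).hasDerivAt
      have h2' : deriv (deriv y₁) s = g s - p s * deriv y₁ s - q s * y₁ s := by
        have := ha3 s hs; linarith
      rw [show ivpF p q g s (u₁ s) = (deriv y₁ s, deriv (deriv y₁) s) from by
        simp [ivpF, hu₁, h2']]
      exact a1.prodMk a2
    have hv : ∀ s ∈ I, HasDerivAt u₂ (ivpF p q g s (u₂ s)) s := by
      intro s hs
      have a1 : HasDerivAt y₂ (deriv y₂ s) s := (hb1 s hs).hasDerivAt
      have a2 : HasDerivAt (deriv y₂) (deriv (deriv y₂) s) s := (hb2 s hs).hasDerivAt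
      have h2' : deriv (deriv y₂) s = g s - p s * deriv y₂ s - q s * y₂ s := by
        have := hb3 s hs; linarith
      rw [show ivpF p q g s (u₂ s) = (deriv y₂ s, deriv (deriv y₂) s) from by
        simp [ivpF, hu₂, h2']]
      exact a1.prodMk a2
    obtain ⟨a, b, hab, hta, ht0'⟩ := ivp_bracket I hIopen hIconv ht ht₀
    have heq := ivp_uniq I p q g hp hq a b t₀ hab ht0' u₁ u₂
      (fun s hs => hu s (hab (Ioo_subset_Icc_self hs)))
      (fun s hs => hv s (hab (Ioo_subset_Icc_self hs)))
      (by simp [hu₁, hu₂, ha4, ha5, hb4, hb5])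
    have := heq hta
    exact congrArg Prod.fst this
end

section
/- For every r > 0 and θ ∈ (0,π), the curves s ↦ θ̄(s) and s ↦ r̄(s) are differentiable on ℝ and satisfy the characteristic system dθ̄/ds = sin(θ̄(s)) and dr̄/ds = −r̄(s)·cos(θ̄(s)) for all s ∈ ℝ. -/
/-- The characteristic curve `s ↦ θ̄(s)`. -/
noncomputable def thetaBar (s : ℝ) : ℝ :=
  Real.arccos ((1 - Real.exp (2 * s)) / (1 + Real.exp (2 * s)))

/-- The characteristic curve `s ↦ r̄(s)` associated with the point `(r, θ)`. -/
noncomputable def rBar (r θ s : ℝ) : ℝ :=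
  (r * Real.sin θ / 2) * (Real.exp s + Real.exp (-s))

/-- The curves `s ↦ θ̄(s)` and `s ↦ r̄(s)` are differentiable on `ℝ` and satisfy
the characteristic system `dθ̄/ds = sin(θ̄(s))`, `dr̄/ds = −r̄(s)·cos(θ̄(s))`. -/
theorem characteristic_system (r θ : ℝ) (hr : 0 < r) (hθ : θ ∈ Set.Ioo 0 Real.pi)
    (s : ℝ) :
    HasDerivAt thetaBar (Real.sin (thetaBar s)) s ∧
    HasDerivAt (rBar r θ) (-(rBar r θ s) * Real.cos (thetaBar s)) s := by
  have hu : (0:ℝ) < Real.exp (2*s) := Real.exp_pos _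
  have hes : (0:ℝ) < Real.exp s := Real.exp_pos _
  set u := Real.exp (2*s) with hud
  have h1u : (0:ℝ) < 1 + u := by linarith
  have h1u' : (1:ℝ) + u ≠ 0 := ne_of_gt h1u
  have hg1 : (1 - u)/(1+u) < 1 := by rw [div_lt_one h1u]; linarith
  have hgm1 : -1 < (1-u)/(1+u) := by
    rw [lt_div_iff₀ h1u]; linarith
  have hues : u = Real.exp s * Real.exp s := by
    rw [hud, ← Real.exp_add]; ring_nf
  -- derivative of the inner function
  have h0 : HasDerivAt (fun t : ℝ => Real.exp (2*t)) (2*u) s := by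
    have h2 : HasDerivAt (fun t : ℝ => 2*t) 2 s := by
      simpa using (hasDerivAt_id s).const_mul 2
    have := (Real.hasDerivAt_exp (2*s)).comp s h2
    exact this.congr_deriv (by rw [hud]; ring)
  have hnum : HasDerivAt (fun t => 1 - Real.exp (2*t)) (-(2*u)) s := h0.const_sub 1
  have hden : HasDerivAt (fun t => 1 + Real.exp (2*t)) (2*u) s := h0.const_add 1
  have hg : HasDerivAt (fun t => (1 - Real.exp (2*t)) / (1 + Real.exp (2*t)))
      ((-(2*u) * (1+u) - (1-u) * (2*u)) / (1+u)^2) s := hnum.div hden h1u'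
  have hgval : (-(2*u) * (1+u) - (1-u) * (2*u)) / (1+u)^2 = -(4*u) / (1+u)^2 := by
    field_simp; ring
  rw [hgval] at hg
  have harc := (Real.hasDerivAt_arccos (ne_of_gt hgm1) (ne_of_lt hg1)).comp s hg
  have hne : (1:ℝ) + Real.exp s * Real.exp s ≠ 0 := by positivity
  have hsq : 1 - ((1-u)/(1+u))^2 = (2*Real.exp s/(1+u))^2 := by
    rw [hues]
    field_simp
    ring
  have hsqrt : Real.sqrt (1 - ((1-u)/(1+u))^2) = 2*Real.exp s/(1+u) := by
    rw [hsq]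
    exact Real.sqrt_sq (by positivity)
  have hsin : Real.sin (thetaBar s) = 2*Real.exp s/(1+u) := by
    rw [thetaBar, Real.sin_arccos]
    exact hsqrt
  constructor
  · have hval2 : -(1 / Real.sqrt (1 - ((1-u)/(1+u))^2)) * (-(4*u) / (1+u)^2) = 2*Real.exp s/(1+u) := by
      rw [hsqrt, hues]
      field_simp
      ring
    rw [hsin, ← hval2]
    exact harc
  · have hcos : Real.cos (thetaBar s) = (1-u)/(1+u) := by
      rw [thetaBar, Real.cos_arccos (le_of_lt hgm1) (le_of_lt hg1), hud]
    have hd : HasDerivAt (fun t => (r * Real.sin θ / 2) * (Real.exp t + Real.exp (-t)))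
        ((r * Real.sin θ / 2) * (Real.exp s - Real.exp (-s))) s := by
      have h1 : HasDerivAt (fun t : ℝ => Real.exp t) (Real.exp s) s := Real.hasDerivAt_exp s
      have h2 : HasDerivAt (fun t : ℝ => Real.exp (-t)) (-Real.exp (-s)) s := by
        have := (Real.hasDerivAt_exp (-s)).comp s ((hasDerivAt_id s).neg)
        exact this.congr_deriv (by ring)
      simpa [sub_eq_add_neg] using ((h1.add h2).const_mul (r * Real.sin θ / 2))
    have hval : (r * Real.sin θ / 2) * (Real.exp s - Real.exp (-s))
        = -(rBar r θ s) * Real.cos (thetaBar s) := by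
      rw [hcos, rBar, Real.exp_neg, hues]
      field_simp
      ring
    rw [← hval]
    exact hd
end

section
/- The function U is continuously differentiable on (0,∞)×(0,π), satisfies U(ξ, π/2) = F(ξ) for all ξ > 0, and solves the first-order linear PDE −(r·cos θ)·∂U/∂r + (sin θ)·∂U/∂θ = (r·sin θ)·g·ρ_θ(r,θ) at every point (r,θ) ∈ (0,∞)×(0,π). -/
/-- The function `f(θ) = ½·ln((1−cos θ)/(1+cos θ))`. -/
noncomputable def fChar (θ : ℝ) : ℝ :=
  (1 / 2) * Real.log ((1 - Real.cos θ) / (1 + Real.cos θ))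

/-- `U(r,θ) = F(r·sin θ) + g·r·sin θ·∫₀^{f(θ)} ρ_θ(r̄(s), θ̄(s)) ds`. -/
noncomputable def UU (g : ℝ) (ρθ : ℝ → ℝ → ℝ) (F : ℝ → ℝ) (r θ : ℝ) : ℝ :=
  F (r * Real.sin θ) +
    g * r * Real.sin θ * ∫ s in (0:ℝ)..(fChar θ), ρθ (rBar r θ s) (thetaBar s)

open Real MeasureTheory Set Metric intervalIntegral

namespace CharPDE


def EE : Set (ℝ × ℝ) := Set.Ioi 0 ×ˢ (Set.univ : Set ℝ)
lemma isOpen_EE : IsOpen EE := isOpen_Ioi.prod isOpen_univ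
lemma mem_EE {q : ℝ × ℝ} : q ∈ EE ↔ 0 < q.1 := by simp [EE]

noncomputable def Mlin (u : ℝ) : (ℝ × ℝ) →L[ℝ] (ℝ × ℝ) :=
  (ContinuousLinearMap.fst ℝ ℝ ℝ).prod ((0 : (ℝ×ℝ) →L[ℝ] ℝ)) +
    u • ((0 : (ℝ×ℝ) →L[ℝ] ℝ)).prod (ContinuousLinearMap.snd ℝ ℝ ℝ)

lemma Mlin_apply (u : ℝ) (q : ℝ × ℝ) : Mlin u q = (q.1, q.2 * u) := by
  simp [Mlin, Prod.ext_iff, mul_comm]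

lemma Mlin_norm_le {u : ℝ} (hu : |u| ≤ 1) : ‖Mlin u‖ ≤ 1 := by
  refine ContinuousLinearMap.opNorm_le_bound _ zero_le_one (fun q => ?_)
  rw [Mlin_apply, one_mul]
  rw [Prod.norm_def, Prod.norm_def]
  refine max_le (le_max_left _ _) (le_trans ?_ (le_max_right _ _))
  rw [Real.norm_eq_abs, Real.norm_eq_abs, abs_mul]
  calc |q.2| * |u| ≤ |q.2| * 1 := by gcongr
    _ = |q.2| := mul_one _

lemma continuous_Mlin : Continuous Mlin :=
  continuous_const.add (continuous_id.smul continuous_const)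

lemma hasFDerivAt_curve (u : ℝ) (q : ℝ × ℝ) :
    HasFDerivAt (fun q : ℝ × ℝ => ((q.1 : ℝ), q.2 * u)) (Mlin u) q := by
  refine (Mlin u).hasFDerivAt.congr_of_eventuallyEq ?_
  exact Filter.Eventually.of_forall fun p => (Mlin_apply u p).symm

noncomputable def Pint (h : ℝ × ℝ → ℝ) (q : ℝ × ℝ) : ℝ :=
  ∫ u in (0:ℝ)..1, h (q.1, q.2 * u)

lemma Pint_eq (h : ℝ × ℝ → ℝ) (ξ t : ℝ) :
    t * Pint h (ξ, t) = ∫ s in (0:ℝ)..t, h (ξ, s) := by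
  have := intervalIntegral.smul_integral_comp_mul_left
    (a := 0) (b := 1) (fun s => h (ξ, s)) t
  simpa [Pint, smul_eq_mul] using this

theorem contDiffOn_Pint {h : ℝ × ℝ → ℝ} (hh : ContDiffOn ℝ 1 h EE) :
    ContDiffOn ℝ 1 (Pint h) EE := by
  have hC' : ContinuousOn (fun p => fderiv ℝ h p) EE :=
    hh.continuousOn_fderiv_of_isOpen isOpen_EE le_rfl
  have hdiffat : ∀ p ∈ EE, HasFDerivAt h (fderiv ℝ h p) p := fun p hp =>
    ((hh.differentiableOn one_ne_zero).differentiableAt (isOpen_EE.mem_nhds hp)).hasFDerivAt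
  have memE' : ∀ q ∈ EE, ∀ u : ℝ, ((q.1 : ℝ), q.2 * u) ∈ EE := by
    intro q hq u; rw [mem_EE] at hq ⊢; exact hq
  have hcurvec : ∀ q : ℝ × ℝ, Continuous (fun u : ℝ => ((q.1 : ℝ), q.2 * u)) := by
    intro q; fun_prop
  have hcont_slice : ∀ q ∈ EE, Continuous fun u : ℝ => h (q.1, q.2 * u) := fun q hq =>
    hh.continuousOn.comp_continuous (hcurvec q) (memE' q hq)
  -- the pointwise derivative of the integrand in the parameter
  set Ψ : (ℝ × ℝ) → ℝ → ((ℝ × ℝ) →L[ℝ] ℝ) :=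
    fun q u => (fderiv ℝ h (q.1, q.2 * u)).comp (Mlin u) with hΨdef
  have hasfderiv : ∀ q ∈ EE, ∀ u : ℝ,
      HasFDerivAt (fun q : ℝ × ℝ => h (q.1, q.2 * u)) (Ψ q u) q := by
    intro q hq u
    have := (hdiffat _ (memE' q hq u)).comp q (hasFDerivAt_curve u q)
    exact this
  have hΨcont_slice : ∀ q ∈ EE, Continuous fun u => Ψ q u := by
    intro q hq
    exact (hC'.comp_continuous (hcurvec q) (memE' q hq)).clm_comp continuous_Mlin
  have huIcc : ∀ u ∈ Set.uIoc (0:ℝ) 1, u ∈ Set.Icc (0:ℝ) 1 := by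
    intro u hu
    rw [Set.uIoc_of_le (by norm_num : (0:ℝ) ≤ 1)] at hu
    exact Ioc_subset_Icc_self hu
  set L : (ℝ × ℝ) → ((ℝ × ℝ) →L[ℝ] ℝ) :=
    fun q => ∫ u in (0:ℝ)..1, Ψ q u with hLdef
  -- local uniform bound for Ψ near any point of EE
  have keybound : ∀ q₀ ∈ EE, ∃ ε > 0, ∃ C' ≥ (0:ℝ), closedBall q₀ ε ⊆ EE ∧
      ∀ q ∈ closedBall q₀ ε, ∀ u ∈ Set.Icc (0:ℝ) 1, ‖Ψ q u‖ ≤ C' := by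
    intro q₀ hq₀
    rw [mem_EE] at hq₀
    set ε := q₀.1 / 2 with hεdef
    have hε : 0 < ε := by positivity
    set R := |q₀.2| + ε with hRdef
    set K : Set (ℝ × ℝ) := Icc (q₀.1 - ε) (q₀.1 + ε) ×ˢ Icc (-R) R with hKdef
    have hKcompact : IsCompact K := isCompact_Icc.prod isCompact_Icc
    have hKE : K ⊆ EE := by
      intro p hp
      rw [mem_EE]
      have h1 := hp.1.1
      have : q₀.1 - ε = ε := by rw [hεdef]; ring
      linarith [this ▸ h1]
    have hmemK : ∀ q ∈ closedBall q₀ ε, ∀ u ∈ Set.Icc (0:ℝ) 1, ((q.1:ℝ), q.2 * u) ∈ K := by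
      intro q hq u hu
      rw [mem_closedBall, Prod.dist_eq, max_le_iff, Real.dist_eq, Real.dist_eq] at hq
      constructor
      · constructor <;> [linarith [abs_le.mp hq.1] ; linarith [(abs_le.mp hq.1).2]]
      · have h2 : |q.2| ≤ |q₀.2| + ε := by
          have := abs_le.mp hq.2
          cases abs_cases q.2 <;> cases abs_cases q₀.2 <;> linarith
        have : |q.2 * u| ≤ R := by
          rw [abs_mul]
          calc |q.2| * |u| ≤ (|q₀.2| + ε) * 1 := by
                apply mul_le_mul h2 _ (abs_nonneg _) (by positivity)
                rw [abs_le]; exact ⟨by linarith [hu.1], hu.2⟩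
            _ = R := by rw [hRdef]; ring
        exact abs_le.mp this
    obtain ⟨C, hC⟩ := hKcompact.exists_bound_of_continuousOn (hC'.mono hKE)
    refine ⟨ε, hε, max C 0, le_max_right _ _, ?_, ?_⟩
    · intro q hq
      rw [mem_EE]
      rw [mem_closedBall, Prod.dist_eq, max_le_iff, Real.dist_eq] at hq
      have := (abs_le.mp hq.1).1
      have h2 : q₀.1 - ε = ε := by rw [hεdef]; ring
      linarith
    · intro q hq u hu
      have hM : ‖Mlin u‖ ≤ 1 := Mlin_norm_le (by rw [abs_le]; exact ⟨by linarith [hu.1], hu.2⟩)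
      calc ‖Ψ q u‖ ≤ ‖fderiv ℝ h (q.1, q.2 * u)‖ * ‖Mlin u‖ :=
            ContinuousLinearMap.opNorm_comp_le _ _
        _ ≤ max C 0 * 1 := by
            apply mul_le_mul _ hM (norm_nonneg _) (le_max_right _ _)
            exact le_trans (hC _ (hmemK q hq u hu)) (le_max_left _ _)
        _ = max C 0 := mul_one _
  -- differentiability with derivative L
  have hLd : ∀ q₀ ∈ EE, HasFDerivAt (Pint h) (L q₀) q₀ := by
    intro q₀ hq₀
    obtain ⟨ε, hε, C', hC'0, hballE, hbound⟩ := keybound q₀ hq₀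
    have hballE' : ball q₀ ε ⊆ EE := ball_subset_closedBall.trans hballE
    refine (intervalIntegral.hasFDerivAt_integral_of_dominated_loc_of_lip
      (F := fun (q : ℝ × ℝ) u => h (q.1, q.2 * u)) (F' := Ψ q₀) (bound := fun _ => C')
      (μ := volume) (a := 0) (b := 1) (x₀ := q₀) (ball_mem_nhds q₀ hε)
      ?_ ?_ ?_ ?_ ?_ ?_).2
    · filter_upwards [isOpen_EE.mem_nhds hq₀] with q hq
      exact (hcont_slice q hq).aestronglyMeasurable
    · exact ((hcont_slice q₀ hq₀).intervalIntegrable 0 1)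
    · exact (hΨcont_slice q₀ hq₀).aestronglyMeasurable
    · refine Filter.Eventually.of_forall fun u hu => ?_
      refine (convex_ball q₀ ε).lipschitzOnWith_of_nnnorm_hasFDerivWithin_le
        (f' := fun q => Ψ q u)
        (fun q hq => (hasfderiv q (hballE' hq) u).hasFDerivWithinAt) (fun q hq => ?_)
      rw [← NNReal.coe_le_coe, coe_nnnorm, Real.coe_nnabs, abs_of_nonneg hC'0]
      exact hbound q (ball_subset_closedBall hq) u (huIcc u hu)
    · exact intervalIntegrable_const
    · exact Filter.Eventually.of_forall fun u _ => hasfderiv q₀ hq₀ u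
  have hLcont : ContinuousOn L EE := by
    intro q₀ hq₀
    obtain ⟨ε, hε, C', hC'0, hballE, hbound⟩ := keybound q₀ hq₀
    apply ContinuousAt.continuousWithinAt
    apply intervalIntegral.continuousAt_of_dominated_interval (bound := fun _ => C')
    · filter_upwards [isOpen_EE.mem_nhds hq₀] with q hq
      exact (hΨcont_slice q hq).aestronglyMeasurable
    · filter_upwards [closedBall_mem_nhds q₀ hε] with q hq
      exact Filter.Eventually.of_forall fun u hu => hbound q hq u (huIcc u hu)
    · exact intervalIntegrable_const
    · refine Filter.Eventually.of_forall fun u _ => ?_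
      have hf : ContinuousAt (fun q : ℝ × ℝ => ((q.1 : ℝ), q.2 * u)) q₀ := by fun_prop
      have h1 : ContinuousAt (fun q : ℝ × ℝ => fderiv ℝ h (q.1, q.2 * u)) q₀ :=
        ContinuousAt.comp (hC'.continuousAt (isOpen_EE.mem_nhds (memE' q₀ hq₀ u))) hf
      exact ((ContinuousLinearMap.compL ℝ (ℝ × ℝ) (ℝ × ℝ) ℝ).continuous₂.continuousAt).comp
        (h1.prodMk continuousAt_const)
  intro q hq
  exact (contDiffAt_one_iff.mpr
    ⟨L, EE, isOpen_EE.mem_nhds hq, hLcont, fun p hp => hLd p hp⟩).contDiffWithinAt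



lemma cratio_mem (s : ℝ) :
    (1 - Real.exp (2 * s)) / (1 + Real.exp (2 * s)) ∈ Set.Ioo (-1 : ℝ) 1 := by
  have he : 0 < Real.exp (2 * s) := Real.exp_pos _
  have hd : 0 < 1 + Real.exp (2 * s) := by linarith
  constructor
  · rw [lt_div_iff₀ hd]; linarith
  · rw [div_lt_one hd]; linarith

lemma contDiff_thetaBar : ContDiff ℝ 1 thetaBar := by
  rw [contDiff_iff_contDiffAt]
  intro s
  have hc : ContDiff ℝ 1 (fun s : ℝ => (1 - Real.exp (2 * s)) / (1 + Real.exp (2 * s))) := by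
    apply ContDiff.div (by fun_prop) (by fun_prop)
    intro x; have := Real.exp_pos (2 * x); intro h; linarith [h]
  have hmem := cratio_mem s
  have h1 : (1 - Real.exp (2 * s)) / (1 + Real.exp (2 * s)) ≠ -1 := hmem.1.ne'
  have h2 : (1 - Real.exp (2 * s)) / (1 + Real.exp (2 * s)) ≠ 1 := hmem.2.ne
  have harc : ContDiffAt ℝ 1 Real.arccos ((1 - Real.exp (2 * s)) / (1 + Real.exp (2 * s))) := by
    have : Real.arccos = fun x => Real.pi / 2 - Real.arcsin x := by
      funext x; exact Real.arccos_eq_pi_div_two_sub_arcsin x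
    rw [this]
    exact contDiffAt_const.sub (Real.contDiffAt_arcsin h1 h2)
  exact harc.comp s hc.contDiffAt

lemma thetaBar_mem (s : ℝ) : thetaBar s ∈ Set.Ioo 0 Real.pi := by
  have hmem := cratio_mem s
  constructor
  · exact Real.arccos_pos.mpr hmem.2
  · refine lt_of_le_of_ne (Real.arccos_le_pi _) fun h => ?_
    have := Real.arccos_eq_pi.mp h
    linarith [hmem.1]

variable {θ : ℝ}

lemma one_sub_cos_pos (hθ : θ ∈ Set.Ioo 0 Real.pi) : 0 < 1 - Real.cos θ := by
  have : Real.cos θ < Real.cos 0 :=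
    Real.cos_lt_cos_of_nonneg_of_le_pi le_rfl hθ.2.le hθ.1
  rw [Real.cos_zero] at this; linarith

lemma one_add_cos_pos (hθ : θ ∈ Set.Ioo 0 Real.pi) : 0 < 1 + Real.cos θ := by
  have : Real.cos Real.pi < Real.cos θ :=
    Real.cos_lt_cos_of_nonneg_of_le_pi hθ.1.le le_rfl hθ.2
  rw [Real.cos_pi] at this; linarith

lemma exp_two_fChar (hθ : θ ∈ Set.Ioo 0 Real.pi) :
    Real.exp (2 * fChar θ) = (1 - Real.cos θ) / (1 + Real.cos θ) := by
  have h1 := one_sub_cos_pos hθ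
  have h2 := one_add_cos_pos hθ
  have hu : 0 < (1 - Real.cos θ) / (1 + Real.cos θ) := div_pos h1 h2
  rw [fChar, show 2 * ((1:ℝ)/2 * Real.log ((1 - Real.cos θ) / (1 + Real.cos θ)))
    = Real.log ((1 - Real.cos θ) / (1 + Real.cos θ)) by ring, Real.exp_log hu]

lemma exp_fChar_mul (hθ : θ ∈ Set.Ioo 0 Real.pi) :
    Real.exp (fChar θ) * (1 + Real.cos θ) = Real.sin θ := by
  have h1 := one_sub_cos_pos hθ
  have h2 := one_add_cos_pos hθ
  have hs : 0 < Real.sin θ := Real.sin_pos_of_pos_of_lt_pi hθ.1 hθ.2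
  have ha : 0 < Real.exp (fChar θ) := Real.exp_pos _
  have ha2 : Real.exp (fChar θ) ^ 2 = (1 - Real.cos θ) / (1 + Real.cos θ) := by
    rw [sq, ← Real.exp_add, show fChar θ + fChar θ = 2 * fChar θ by ring]
    exact exp_two_fChar hθ
  have hsq : (Real.exp (fChar θ) * (1 + Real.cos θ)) ^ 2 = Real.sin θ ^ 2 := by
    rw [mul_pow, ha2, Real.sin_sq]
    field_simp
    ring
  nlinarith [mul_pos ha h2, hs]

lemma thetaBar_fChar (hθ : θ ∈ Set.Ioo 0 Real.pi) : thetaBar (fChar θ) = θ := by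
  have h2 := one_add_cos_pos hθ
  rw [thetaBar, exp_two_fChar hθ]
  have : (1 - (1 - Real.cos θ) / (1 + Real.cos θ)) / (1 + (1 - Real.cos θ) / (1 + Real.cos θ))
      = Real.cos θ := by
    field_simp
    ring
  rw [this, Real.arccos_cos hθ.1.le hθ.2.le]

lemma rBar_fChar {r : ℝ} (hθ : θ ∈ Set.Ioo 0 Real.pi) :
    r * Real.sin θ / 2 * (Real.exp (fChar θ) + Real.exp (-fChar θ)) = r := by
  have h2 := one_add_cos_pos hθ
  have hs : 0 < Real.sin θ := Real.sin_pos_of_pos_of_lt_pi hθ.1 hθ.2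
  have ha : 0 < Real.exp (fChar θ) := Real.exp_pos _
  have hkey := exp_fChar_mul hθ
  rw [Real.exp_neg]
  have ha2 : Real.exp (fChar θ) ^ 2 = (1 - Real.cos θ) / (1 + Real.cos θ) := by
    rw [sq, ← Real.exp_add, show fChar θ + fChar θ = 2 * fChar θ by ring]
    exact exp_two_fChar hθ
  have hsum : Real.exp (fChar θ) + (Real.exp (fChar θ))⁻¹ = 2 / Real.sin θ := by
    rw [eq_div_iff hs.ne']
    have : (Real.exp (fChar θ) + (Real.exp (fChar θ))⁻¹) * Real.exp (fChar θ)
        = Real.exp (fChar θ) ^ 2 + 1 := by field_simp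
    have h3 : (Real.exp (fChar θ) + (Real.exp (fChar θ))⁻¹) * Real.sin θ * Real.exp (fChar θ)
        = (Real.exp (fChar θ) ^ 2 + 1) * Real.sin θ := by
      nlinarith [this]
    have h4 : (Real.exp (fChar θ) ^ 2 + 1) * Real.sin θ = 2 * Real.exp (fChar θ) := by
      rw [ha2]
      have hx : (1 - Real.cos θ) / (1 + Real.cos θ) + 1 = 2 / (1 + Real.cos θ) := by
        field_simp; ring
      rw [hx]
      rw [div_mul_eq_mul_div, div_eq_iff h2.ne']
      nlinarith [hkey]
    have := h3.trans h4
    nlinarith [ha]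
  rw [hsum]
  field_simp

lemma hasDerivAt_fChar (hθ : θ ∈ Set.Ioo 0 Real.pi) :
    HasDerivAt fChar (1 / Real.sin θ) θ := by
  have h1 := one_sub_cos_pos hθ
  have h2 := one_add_cos_pos hθ
  have hs : 0 < Real.sin θ := Real.sin_pos_of_pos_of_lt_pi hθ.1 hθ.2
  set G : ℝ → ℝ := fun x => (1/2) * (Real.log (1 - Real.cos x) - Real.log (1 + Real.cos x))
    with hGdef
  have heq : fChar =ᶠ[nhds θ] G := by
    filter_upwards [isOpen_Ioo.mem_nhds hθ] with x hx
    rw [fChar, hGdef]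
    rw [Real.log_div (one_sub_cos_pos hx).ne' (one_add_cos_pos hx).ne']
  have hd1 : HasDerivAt (fun x : ℝ => 1 - Real.cos x) (Real.sin θ) θ := by
    simpa using (Real.hasDerivAt_cos θ).const_sub 1
  have hd2 : HasDerivAt (fun x : ℝ => 1 + Real.cos x) (-Real.sin θ) θ := by
    simpa using (Real.hasDerivAt_cos θ).const_add 1
  have hG : HasDerivAt G ((1/2) * (Real.sin θ / (1 - Real.cos θ)
      - -Real.sin θ / (1 + Real.cos θ))) θ :=
    ((hd1.log h1.ne').sub (hd2.log h2.ne')).const_mul _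
  have hval : (1/2) * (Real.sin θ / (1 - Real.cos θ) - -Real.sin θ / (1 + Real.cos θ))
      = 1 / Real.sin θ := by
    have hs2 : Real.sin θ ^ 2 = 1 - Real.cos θ ^ 2 := Real.sin_sq θ
    field_simp
    nlinarith [hs2]
  rw [← hval]
  exact hG.congr_of_eventuallyEq heq

lemma contDiffAt_fChar (hθ : θ ∈ Set.Ioo 0 Real.pi) : ContDiffAt ℝ 1 fChar θ := by
  have h1 := one_sub_cos_pos hθ
  have h2 := one_add_cos_pos hθ
  have heq : fChar =ᶠ[nhds θ] fun x => (1/2) *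
      (Real.log (1 - Real.cos x) - Real.log (1 + Real.cos x)) := by
    filter_upwards [isOpen_Ioo.mem_nhds hθ] with x hx
    rw [fChar, Real.log_div (one_sub_cos_pos hx).ne' (one_add_cos_pos hx).ne']
  refine ContDiffAt.congr_of_eventuallyEq ?_ heq
  have hcos : ContDiffAt ℝ 1 (fun x : ℝ => 1 - Real.cos x) θ :=
    (contDiff_const.sub Real.contDiff_cos).contDiffAt
  have hcos' : ContDiffAt ℝ 1 (fun x : ℝ => 1 + Real.cos x) θ :=
    (contDiff_const.add Real.contDiff_cos).contDiffAt
  exact contDiffAt_const.mul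
    (((Real.contDiffAt_log.mpr h1.ne').comp θ hcos).sub
      ((Real.contDiffAt_log.mpr h2.ne').comp θ hcos'))

lemma fChar_pi_div_two : fChar (Real.pi / 2) = 0 := by
  rw [fChar, Real.cos_pi_div_two]
  norm_num


end CharPDE

open CharPDE in
/-- `U` is continuously differentiable on `(0,∞)×(0,π)`, equals `F` on the
Equator `θ = π/2`, and solves the first-order linear PDE
`−(r·cos θ)·U_r + (sin θ)·U_θ = (r·sin θ)·g·ρ_θ(r,θ)`. -/
theorem UU_solves_characteristic_PDE (g : ℝ) (hg : 0 < g) (ρ ρθ : ℝ → ℝ → ℝ)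
    (hρ : ContDiffOn ℝ 2 (fun q : ℝ × ℝ => ρ q.1 q.2)
      (Set.Ioi 0 ×ˢ Set.Ioo 0 Real.pi))
    (hρθ : ∀ r ∈ Set.Ioi (0:ℝ), ∀ t ∈ Set.Ioo 0 Real.pi,
      HasDerivAt (fun u => ρ r u) (ρθ r t) t)
    (F : ℝ → ℝ) (hF : ContDiffOn ℝ 1 F (Set.Ioi 0)) :
    ContDiffOn ℝ 1 (fun q : ℝ × ℝ => UU g ρθ F q.1 q.2)
      (Set.Ioi 0 ×ˢ Set.Ioo 0 Real.pi) ∧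
    (∀ ξ : ℝ, 0 < ξ → UU g ρθ F ξ (Real.pi / 2) = F ξ) ∧
    (∀ r ∈ Set.Ioi (0:ℝ), ∀ θ ∈ Set.Ioo 0 Real.pi,
      -(r * Real.cos θ) * deriv (fun r' => UU g ρθ F r' θ) r +
        Real.sin θ * deriv (fun θ' => UU g ρθ F r θ') θ =
      r * Real.sin θ * g * ρθ r θ) := by
  set D : Set (ℝ × ℝ) := Set.Ioi 0 ×ˢ Set.Ioo 0 Real.pi with hDdef
  have hD : IsOpen D := isOpen_Ioi.prod isOpen_Ioo
  -- ρθ is C¹ on D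
  have hρ1 : ContDiffOn ℝ 1
      (fun q : ℝ × ℝ => fderiv ℝ (fun q : ℝ × ℝ => ρ q.1 q.2) q) D :=
    hρ.fderiv_of_isOpen hD (by norm_num)
  have hρθeq : ∀ q ∈ D,
      ρθ q.1 q.2 = (fderiv ℝ (fun q : ℝ × ℝ => ρ q.1 q.2) q) ((0:ℝ), (1:ℝ)) := by
    intro q hq
    have hdiff : DifferentiableAt ℝ (fun q : ℝ × ℝ => ρ q.1 q.2) q :=
      (hρ.differentiableOn (by norm_num)).differentiableAt (hD.mem_nhds hq)
    have hcurve : HasDerivAt (fun t : ℝ => ((q.1 : ℝ), t)) ((0:ℝ), (1:ℝ)) q.2 :=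
      (hasDerivAt_const q.2 q.1).prodMk (hasDerivAt_id q.2)
    have h1 := hdiff.hasFDerivAt.comp_hasDerivAt q.2 hcurve
    exact (hρθ q.1 hq.1 q.2 hq.2).unique h1
  have hρθC : ContDiffOn ℝ 1 (fun q : ℝ × ℝ => ρθ q.1 q.2) D :=
    (hρ1.clm_apply contDiffOn_const).congr hρθeq
  -- the integrand along characteristics
  set hfun : ℝ × ℝ → ℝ :=
    fun p => ρθ (p.1 / 2 * (Real.exp p.2 + Real.exp (-p.2))) (thetaBar p.2) with hfundef
  have hψ1 : ContDiff ℝ 1 (fun p : ℝ × ℝ => p.1 / 2 * (Real.exp p.2 + Real.exp (-p.2))) :=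
    (contDiff_fst.div_const 2).mul ((Real.contDiff_exp.comp contDiff_snd).add
      (Real.contDiff_exp.comp contDiff_snd.neg))
  have hψ : ContDiffOn ℝ 1 (fun p : ℝ × ℝ =>
      ((p.1 / 2 * (Real.exp p.2 + Real.exp (-p.2)) : ℝ), thetaBar p.2)) EE :=
    (hψ1.prodMk (contDiff_thetaBar.comp contDiff_snd)).contDiffOn
  have hψmaps : Set.MapsTo (fun p : ℝ × ℝ =>
      ((p.1 / 2 * (Real.exp p.2 + Real.exp (-p.2)) : ℝ), thetaBar p.2)) EE D := by
    intro p hp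
    rw [mem_EE] at hp
    constructor
    · show p.1 / 2 * (Real.exp p.2 + Real.exp (-p.2)) ∈ Set.Ioi 0
      rw [Set.mem_Ioi]
      have h1 := Real.exp_pos p.2
      have h2 := Real.exp_pos (-p.2)
      nlinarith
    · exact thetaBar_mem p.2
  have hhfun : ContDiffOn ℝ 1 hfun EE := hρθC.comp hψ hψmaps
  have hPC : ContDiffOn ℝ 1 (Pint hfun) EE := contDiffOn_Pint hhfun
  -- rewriting U in terms of Pint
  have hUrw : ∀ r' θ' : ℝ, UU g ρθ F r' θ' = F (r' * Real.sin θ') +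
      g * r' * Real.sin θ' * (fChar θ' * Pint hfun (r' * Real.sin θ', fChar θ')) := by
    intro r' θ'
    rw [UU, Pint_eq hfun]
    rfl
  have hsinD : ∀ q ∈ D, 0 < q.1 * Real.sin q.2 := fun q hq =>
    mul_pos hq.1 (Real.sin_pos_of_pos_of_lt_pi hq.2.1 hq.2.2)
  refine ⟨?_, ?_, ?_⟩
  · -- continuous differentiability
    have hξC : ContDiff ℝ 1 (fun q : ℝ × ℝ => q.1 * Real.sin q.2) :=
      contDiff_fst.mul (Real.contDiff_sin.comp contDiff_snd)
    have hFcomp : ContDiffOn ℝ 1 (fun q : ℝ × ℝ => F (q.1 * Real.sin q.2)) D :=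
      hF.comp hξC.contDiffOn hsinD
    have hfCq : ContDiffOn ℝ 1 (fun q : ℝ × ℝ => fChar q.2) D := fun q hq =>
      ((contDiffAt_fChar hq.2).comp q contDiff_snd.contDiffAt).contDiffWithinAt
    have hPaircomp : ContDiffOn ℝ 1
        (fun q : ℝ × ℝ => Pint hfun (q.1 * Real.sin q.2, fChar q.2)) D :=
      hPC.comp (hξC.contDiffOn.prodMk hfCq) (fun q hq => mem_EE.mpr (hsinD q hq))
    refine ContDiffOn.congr ?_ (fun q hq => hUrw q.1 q.2)
    exact hFcomp.add ((((contDiff_const.mul contDiff_fst).mul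
      (Real.contDiff_sin.comp contDiff_snd)).contDiffOn).mul (hfCq.mul hPaircomp))
  · -- equator values
    intro ξ hξ
    simp [UU, fChar_pi_div_two, Real.sin_pi_div_two, intervalIntegral.integral_same]
  · -- the PDE
    intro r hr θ hθ
    rw [Set.mem_Ioi] at hr
    have hsin : 0 < Real.sin θ := Real.sin_pos_of_pos_of_lt_pi hθ.1 hθ.2
    have hξpos : 0 < r * Real.sin θ := mul_pos hr hsin
    have hp₀ : ((r * Real.sin θ : ℝ), fChar θ) ∈ EE := mem_EE.mpr hξpos
    have hPd : DifferentiableAt ℝ (Pint hfun) (r * Real.sin θ, fChar θ) :=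
      (hPC.differentiableOn one_ne_zero).differentiableAt (isOpen_EE.mem_nhds hp₀)
    set L := fderiv ℝ (Pint hfun) (r * Real.sin θ, fChar θ) with hLdef
    have hL : HasFDerivAt (Pint hfun) L (r * Real.sin θ, fChar θ) := hPd.hasFDerivAt
    set a := L ((1:ℝ), (0:ℝ)) with hadef
    set b := L ((0:ℝ), (1:ℝ)) with hbdef
    have hLlin : ∀ x y : ℝ, L (x, y) = x * a + y * b := by
      intro x y
      have hxy : ((x, y) : ℝ × ℝ) = x • ((1:ℝ), (0:ℝ)) + y • ((0:ℝ), (1:ℝ)) := by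
        simp [Prod.ext_iff]
      rw [hxy, map_add, L.map_smul, L.map_smul, smul_eq_mul, smul_eq_mul]
    have hFd : HasDerivAt F (deriv F (r * Real.sin θ)) (r * Real.sin θ) :=
      ((hF.differentiableOn one_ne_zero).differentiableAt (isOpen_Ioi.mem_nhds hξpos)).hasDerivAt
    -- derivative in r
    have hcur1 : HasDerivAt (fun r' : ℝ => ((r' * Real.sin θ : ℝ), fChar θ))
        ((Real.sin θ : ℝ), (0:ℝ)) r := by
      simpa using ((hasDerivAt_id r).mul_const (Real.sin θ)).prodMk (hasDerivAt_const r (fChar θ))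
    have hP1 : HasDerivAt (fun r' => Pint hfun (r' * Real.sin θ, fChar θ))
        (L (Real.sin θ, 0)) r := by have := hL.comp_hasDerivAt r hcur1; exact this
    have hgr : HasDerivAt (fun r' : ℝ => g * r' * Real.sin θ) (g * Real.sin θ) r := by
      simpa using ((hasDerivAt_id r).const_mul g).mul_const (Real.sin θ)
    have hFr : HasDerivAt (fun r' : ℝ => F (r' * Real.sin θ))
        (deriv F (r * Real.sin θ) * Real.sin θ) r := by
      simpa [Function.comp_def] using hFd.comp r ((hasDerivAt_id r).mul_const (Real.sin θ))
    have hUr : HasDerivAt (fun r' => UU g ρθ F r' θ)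
        (deriv F (r * Real.sin θ) * Real.sin θ +
          (g * Real.sin θ * (fChar θ * Pint hfun (r * Real.sin θ, fChar θ)) +
            g * r * Real.sin θ * (fChar θ * L (Real.sin θ, 0)))) r := by
      have heq : (fun r' => UU g ρθ F r' θ) = fun r' => F (r' * Real.sin θ) +
          g * r' * Real.sin θ * (fChar θ * Pint hfun (r' * Real.sin θ, fChar θ)) :=
        funext fun r' => hUrw r' θ
      rw [heq]
      exact hFr.add (hgr.mul (hP1.const_mul (fChar θ)))
    -- derivative in θ
    have hsincur : HasDerivAt (fun θ' : ℝ => r * Real.sin θ') (r * Real.cos θ) θ :=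
      (Real.hasDerivAt_sin θ).const_mul r
    have hcur2 : HasDerivAt (fun θ' : ℝ => ((r * Real.sin θ' : ℝ), fChar θ'))
        ((r * Real.cos θ : ℝ), 1 / Real.sin θ) θ := hsincur.prodMk (hasDerivAt_fChar hθ)
    have hP2 : HasDerivAt (fun θ' => Pint hfun (r * Real.sin θ', fChar θ'))
        (L (r * Real.cos θ, 1 / Real.sin θ)) θ := by have := hL.comp_hasDerivAt θ hcur2; exact this
    have hgθ : HasDerivAt (fun θ' : ℝ => g * r * Real.sin θ') (g * r * Real.cos θ) θ := by
      simpa [mul_assoc] using (Real.hasDerivAt_sin θ).const_mul (g * r)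
    have hFθ : HasDerivAt (fun θ' : ℝ => F (r * Real.sin θ'))
        (deriv F (r * Real.sin θ) * (r * Real.cos θ)) θ := by
      simpa [Function.comp_def] using hFd.comp θ hsincur
    have hfP : HasDerivAt (fun θ' => fChar θ' * Pint hfun (r * Real.sin θ', fChar θ'))
        (1 / Real.sin θ * Pint hfun (r * Real.sin θ, fChar θ) +
          fChar θ * L (r * Real.cos θ, 1 / Real.sin θ)) θ :=
      (hasDerivAt_fChar hθ).mul hP2
    have hUθ : HasDerivAt (fun θ' => UU g ρθ F r θ')
        (deriv F (r * Real.sin θ) * (r * Real.cos θ) +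
          (g * r * Real.cos θ * (fChar θ * Pint hfun (r * Real.sin θ, fChar θ)) +
            g * r * Real.sin θ * (1 / Real.sin θ * Pint hfun (r * Real.sin θ, fChar θ) +
              fChar θ * L (r * Real.cos θ, 1 / Real.sin θ)))) θ := by
      have heq : (fun θ' => UU g ρθ F r θ') = fun θ' => F (r * Real.sin θ') +
          g * r * Real.sin θ' * (fChar θ' * Pint hfun (r * Real.sin θ', fChar θ')) :=
        funext fun θ' => hUrw r θ'
      rw [heq]
      exact hFθ.add (hgθ.mul hfP)
    -- key identity via FTC and uniqueness of derivatives
    have hslice : Continuous fun s : ℝ => hfun (r * Real.sin θ, s) :=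
      hhfun.continuousOn.comp_continuous (by fun_prop) (fun s => mem_EE.mpr hξpos)
    have hφ1 : HasDerivAt (fun t : ℝ => t * Pint hfun (r * Real.sin θ, t))
        (1 * Pint hfun (r * Real.sin θ, fChar θ) + fChar θ * b) (fChar θ) := by
      have hcur3 : HasDerivAt (fun t : ℝ => ((r * Real.sin θ : ℝ), t)) ((0:ℝ), (1:ℝ))
          (fChar θ) := (hasDerivAt_const _ _).prodMk (hasDerivAt_id _)
      exact (hasDerivAt_id (fChar θ)).mul (hL.comp_hasDerivAt _ hcur3)
    have hφeq : (fun t : ℝ => t * Pint hfun (r * Real.sin θ, t)) =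
        fun t => ∫ s in (0:ℝ)..t, hfun (r * Real.sin θ, s) :=
      funext fun t => Pint_eq hfun _ t
    rw [hφeq] at hφ1
    have hφ2 : HasDerivAt (fun t : ℝ => ∫ s in (0:ℝ)..t, hfun (r * Real.sin θ, s))
        (hfun (r * Real.sin θ, fChar θ)) (fChar θ) :=
      intervalIntegral.integral_hasDerivAt_right (hslice.intervalIntegrable _ _)
        (hslice.stronglyMeasurableAtFilter _ _) hslice.continuousAt
    have hkey : 1 * Pint hfun (r * Real.sin θ, fChar θ) + fChar θ * b = ρθ r θ := by
      rw [hφ1.unique hφ2]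
      show ρθ (r * Real.sin θ / 2 * (Real.exp (fChar θ) + Real.exp (-fChar θ)))
        (thetaBar (fChar θ)) = ρθ r θ
      rw [rBar_fChar hθ, thetaBar_fChar hθ]
    rw [hUr.deriv, hUθ.deriv, ← hkey, hLlin (Real.sin θ) 0,
      hLlin (r * Real.cos θ) (1 / Real.sin θ)]
    field_simp
    ring
end

section
/- Let g > 0, let ρ : (0,∞)×(0,π) → ℝ be continuously differentiable, let U : (0,∞)×(0,π) → ℝ be continuously differentiable, and let p : (0,∞)×(0,π) → ℝ be twice continuously differentiable. If p satisfies ∂p/∂r(r,θ) + g·ρ(r,θ) = U(r,θ)/r and ∂p/∂θ(r,θ) = cot θ·U(r,θ) at every point of (0,∞)×(0,π), then U satisfies −(r·cos θ)·∂U/∂r + (sin θ)·∂U/∂θ = (r·sin θ)·g·ρ_θ(r,θ) at every point of (0,∞)×(0,π). -/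
/-- If the pressure `p` satisfies `p_r + g·ρ = U/r` and `p_θ = cot θ·U`
on `(0,∞)×(0,π)`, then (by equality of mixed second partial derivatives of `p`)
`U` satisfies `−(r·cos θ)·U_r + (sin θ)·U_θ = (r·sin θ)·g·ρ_θ`. -/
theorem pressure_compatibility_gives_PDE (g : ℝ) (hg : 0 < g)
    (ρ ρθ U p : ℝ → ℝ → ℝ)
    (hρ : ContDiffOn ℝ 1 (fun q : ℝ × ℝ => ρ q.1 q.2)
      (Set.Ioi 0 ×ˢ Set.Ioo 0 Real.pi))
    (hρθ : ∀ r ∈ Set.Ioi (0:ℝ), ∀ t ∈ Set.Ioo 0 Real.pi,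
      HasDerivAt (fun u => ρ r u) (ρθ r t) t)
    (hU : ContDiffOn ℝ 1 (fun q : ℝ × ℝ => U q.1 q.2)
      (Set.Ioi 0 ×ˢ Set.Ioo 0 Real.pi))
    (hP : ContDiffOn ℝ 2 (fun q : ℝ × ℝ => p q.1 q.2)
      (Set.Ioi 0 ×ˢ Set.Ioo 0 Real.pi))
    (h₁ : ∀ r ∈ Set.Ioi (0:ℝ), ∀ θ ∈ Set.Ioo 0 Real.pi,
      deriv (fun r' => p r' θ) r + g * ρ r θ = U r θ / r)
    (h₂ : ∀ r ∈ Set.Ioi (0:ℝ), ∀ θ ∈ Set.Ioo 0 Real.pi,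
      deriv (fun θ' => p r θ') θ = Real.cot θ * U r θ) :
    ∀ r ∈ Set.Ioi (0:ℝ), ∀ θ ∈ Set.Ioo 0 Real.pi,
      -(r * Real.cos θ) * deriv (fun r' => U r' θ) r +
        Real.sin θ * deriv (fun θ' => U r θ') θ =
      r * Real.sin θ * g * ρθ r θ := by
  intro r hr θ hθ
  set Ω : Set (ℝ × ℝ) := Set.Ioi 0 ×ˢ Set.Ioo 0 Real.pi with hΩdef
  have hΩ : IsOpen Ω := isOpen_Ioi.prod isOpen_Ioo
  have hx : ((r, θ) : ℝ × ℝ) ∈ Ω := ⟨hr, hθ⟩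
  have hrne : r ≠ 0 := ne_of_gt hr
  have hsin : Real.sin θ ≠ 0 := (Real.sin_pos_of_pos_of_lt_pi hθ.1 hθ.2).ne'
  set F : ℝ × ℝ → ℝ := fun q => p q.1 q.2 with hF
  set Uf : ℝ × ℝ → ℝ := fun q => U q.1 q.2 with hUfdef
  -- slice derivative helpers
  have slice1 : ∀ (f : ℝ × ℝ → ℝ) (f' : ℝ × ℝ →L[ℝ] ℝ) (a b : ℝ),
      HasFDerivAt f f' (a, b) → HasDerivAt (fun s => f (s, b)) (f' (1, 0)) a := by
    intro f f' a b hf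
    have h : HasDerivAt (fun s : ℝ => ((s, b) : ℝ × ℝ)) ((1 : ℝ), (0 : ℝ)) a :=
      (hasDerivAt_id a).prodMk (hasDerivAt_const a b)
    exact hf.comp_hasDerivAt a h
  have slice2 : ∀ (f : ℝ × ℝ → ℝ) (f' : ℝ × ℝ →L[ℝ] ℝ) (a b : ℝ),
      HasFDerivAt f f' (a, b) → HasDerivAt (fun u => f (a, u)) (f' (0, 1)) b := by
    intro f f' a b hf
    have h : HasDerivAt (fun u : ℝ => ((a, u) : ℝ × ℝ)) ((0 : ℝ), (1 : ℝ)) b :=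
      (hasDerivAt_const b a).prodMk (hasDerivAt_id b)
    exact hf.comp_hasDerivAt b h
  -- differentiability facts
  have hFd : ∀ y ∈ Ω, HasFDerivAt F (fderiv ℝ F y) y := fun y hy =>
    ((hP.contDiffAt (hΩ.mem_nhds hy)).differentiableAt (by norm_num)).hasFDerivAt
  have hF1 : ContDiffOn ℝ 1 (fderiv ℝ F) Ω :=
    hP.fderiv_of_isOpen hΩ (by norm_num)
  have hB : HasFDerivAt (fderiv ℝ F) (fderiv ℝ (fderiv ℝ F) (r, θ)) (r, θ) :=
    ((hF1.contDiffAt (hΩ.mem_nhds hx)).differentiableAt one_ne_zero).hasFDerivAt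
  have hUfd : HasFDerivAt Uf (fderiv ℝ Uf (r, θ)) (r, θ) :=
    ((hU.contDiffAt (hΩ.mem_nhds hx)).differentiableAt one_ne_zero).hasFDerivAt
  set B := fderiv ℝ (fderiv ℝ F) (r, θ) with hBdef
  set Ur := fderiv ℝ Uf (r, θ) (1, 0) with hUr
  set Uθ := fderiv ℝ Uf (r, θ) (0, 1) with hUθ
  -- the two first-order equations pointwise on Ω
  have Eq1 : ∀ y ∈ Ω, fderiv ℝ F y ((1 : ℝ), (0 : ℝ)) = Uf y / y.1 - g * ρ y.1 y.2 := by
    intro y hy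
    have hs := slice1 F (fderiv ℝ F y) y.1 y.2 (by simpa using hFd y hy)
    have hd : deriv (fun r' => p r' y.2) y.1 = fderiv ℝ F y (1, 0) := hs.deriv
    have := h₁ y.1 hy.1 y.2 hy.2
    rw [hd] at this
    simp only [hUfdef]
    linarith
  have Eq2 : ∀ y ∈ Ω, fderiv ℝ F y ((0 : ℝ), (1 : ℝ)) = Real.cot y.2 * Uf y := by
    intro y hy
    have hs := slice2 F (fderiv ℝ F y) y.1 y.2 (by simpa using hFd y hy)
    have hd : deriv (fun θ' => p y.1 θ') y.2 = fderiv ℝ F y (0, 1) := hs.deriv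
    have := h₂ y.1 hy.1 y.2 hy.2
    rw [hd] at this
    simpa [hUfdef] using this
  -- differentiate Eq2 in r
  have hL1 : HasDerivAt (fun s => fderiv ℝ F (s, θ) ((0 : ℝ), (1 : ℝ)))
      (B (1, 0) (0, 1)) r := by
    have hcurve : HasDerivAt (fun s : ℝ => ((s, θ) : ℝ × ℝ)) ((1 : ℝ), (0 : ℝ)) r :=
      (hasDerivAt_id r).prodMk (hasDerivAt_const r θ)
    have h1 : HasDerivAt (fun s : ℝ => fderiv ℝ F (s, θ)) (B (1, 0)) r :=
      hB.comp_hasDerivAt r hcurve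
    have h2 := (ContinuousLinearMap.apply ℝ ℝ (((0 : ℝ), (1 : ℝ)) : ℝ × ℝ)).hasFDerivAt.comp_hasDerivAt r h1
    exact h2
  have hR1 : HasDerivAt (fun s => Real.cot θ * Uf (s, θ)) (Real.cot θ * Ur) r :=
    (slice1 Uf _ r θ hUfd).const_mul _
  have hev1 : (fun s => fderiv ℝ F (s, θ) ((0 : ℝ), (1 : ℝ)))
      =ᶠ[nhds r] fun s => Real.cot θ * Uf (s, θ) := by
    have hmem : ∀ᶠ s in nhds r, ((s, θ) : ℝ × ℝ) ∈ Ω := by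
      have hc : ContinuousAt (fun s : ℝ => ((s, θ) : ℝ × ℝ)) r :=
        (continuous_id.prodMk continuous_const).continuousAt
      exact hc.preimage_mem_nhds (hΩ.mem_nhds hx)
    filter_upwards [hmem] with s hs
    simpa using Eq2 (s, θ) hs
  have e1 : B (1, 0) (0, 1) = Real.cot θ * Ur :=
    hL1.unique (hR1.congr_of_eventuallyEq hev1)
  -- differentiate Eq1 in θ
  have hL2 : HasDerivAt (fun u => fderiv ℝ F (r, u) ((1 : ℝ), (0 : ℝ)))
      (B (0, 1) (1, 0)) θ := by
    have hcurve : HasDerivAt (fun u : ℝ => ((r, u) : ℝ × ℝ)) ((0 : ℝ), (1 : ℝ)) θ :=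
      (hasDerivAt_const θ r).prodMk (hasDerivAt_id θ)
    have h1 : HasDerivAt (fun u : ℝ => fderiv ℝ F (r, u)) (B (0, 1)) θ :=
      hB.comp_hasDerivAt θ hcurve
    have h2 := (ContinuousLinearMap.apply ℝ ℝ (((1 : ℝ), (0 : ℝ)) : ℝ × ℝ)).hasFDerivAt.comp_hasDerivAt θ h1
    exact h2
  have hR2 : HasDerivAt (fun u => Uf (r, u) / r - g * ρ r u)
      (Uθ / r - g * ρθ r θ) θ :=
    ((slice2 Uf _ r θ hUfd).div_const r).sub ((hρθ r hr θ hθ).const_mul g)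
  have hev2 : (fun u => fderiv ℝ F (r, u) ((1 : ℝ), (0 : ℝ)))
      =ᶠ[nhds θ] fun u => Uf (r, u) / r - g * ρ r u := by
    have hmem : ∀ᶠ u in nhds θ, ((r, u) : ℝ × ℝ) ∈ Ω := by
      have hc : ContinuousAt (fun u : ℝ => ((r, u) : ℝ × ℝ)) θ :=
        (continuous_const.prodMk continuous_id).continuousAt
      exact hc.preimage_mem_nhds (hΩ.mem_nhds hx)
    filter_upwards [hmem] with u hu
    simpa using Eq1 (r, u) hu
  have e2 : B (0, 1) (1, 0) = Uθ / r - g * ρθ r θ :=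
    hL2.unique (hR2.congr_of_eventuallyEq hev2)
  -- symmetry of second derivative
  have hfev : ∀ᶠ y in nhds ((r, θ) : ℝ × ℝ), HasFDerivAt F (fderiv ℝ F y) y := by
    filter_upwards [hΩ.mem_nhds hx] with y hy using hFd y hy
  have hsymm : B (1, 0) (0, 1) = B (0, 1) (1, 0) :=
    second_derivative_symmetric_of_eventually hfev hB _ _
  have key : Real.cot θ * Ur = Uθ / r - g * ρθ r θ := by
    rw [← e1, hsymm, e2]
  -- rewrite the goal derivatives
  have hUrd : deriv (fun r' => U r' θ) r = Ur := (slice1 Uf _ r θ hUfd).deriv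
  have hUθd : deriv (fun θ' => U r θ') θ = Uθ := (slice2 Uf _ r θ hUfd).deriv
  rw [hUrd, hUθd]
  rw [Real.cot_eq_cos_div_sin] at key
  field_simp at key
  nlinarith [key, Real.sin_pos_of_pos_of_lt_pi hθ.1 hθ.2]
end
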